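/- The map $\varphi(z) = \frac{1}{2}\sqrt{1 - e^{-2\pi i z}}$ (with the branch of square root having positive imaginary part) is a conformal bijection from the slit-strip $\mathbb{S}_{slit} = \{z : -1/2 < \mathrm{Re} z < 1/2\} \setminus \{iy : y \le 0\}$ onto the upper half-plane $\mathbb{H} = \{w : \mathrm{Im}\, w > 0\}$. -/

import Mathlib

open Complex Real

def slitStrip : Set ℂ :=
  {z : ℂ | -(1:ℝ)/2 < z.re ∧ z.re < 1/2 ∧ ¬ (z.re = 0 ∧ z.im ≤ 0)}

private lemma aux_re_im (z : ℂ) :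
    (-2 * (Real.pi : ℂ) * Complex.I * z).re = 2 * Real.pi * z.im ∧
    (-2 * (Real.pi : ℂ) * Complex.I * z).im = -(2 * Real.pi * z.re) := by
  constructor <;> simp [Complex.mul_re, Complex.mul_im]

private lemma aux_mem_slitPlane {z : ℂ} (hz : z ∈ slitStrip) :
    Complex.exp (-2 * (Real.pi : ℂ) * Complex.I * z) - 1 ∈ Complex.slitPlane := by
  obtain ⟨h1, h2, h3⟩ := hz
  obtain ⟨hre, him⟩ := aux_re_im z
  rw [Complex.mem_slitPlane_iff]
  by_cases hx : z.re = 0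
  · left
    have hy : 0 < z.im := by
      by_contra h; exact h3 ⟨hx, le_of_not_gt h⟩
    rw [Complex.sub_re, Complex.exp_re, hre, him, hx]
    have : (1:ℝ) < Real.exp (2 * Real.pi * z.im) := by
      rw [show (1:ℝ) = Real.exp 0 by simp]
      exact Real.exp_lt_exp.mpr (by positivity)
    simpa using this
  · right
    rw [Complex.sub_im, Complex.exp_im, hre, him]
    simp only [Complex.one_im, sub_zero]
    have hs : Real.sin (-(2 * Real.pi * z.re)) ≠ 0 := by
      rw [ne_eq, Real.sin_eq_zero_iff_of_lt_of_lt (by nlinarith [Real.pi_pos]) (by nlinarith [Real.pi_pos])]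
      intro h
      exact hx (by nlinarith [Real.pi_pos])
    exact mul_ne_zero (Real.exp_ne_zero _) hs

private lemma aux_sqrt_sq {u : ℂ} (hu : u ≠ 0) : (u ^ (1/2 : ℂ)) ^ 2 = u := by
  rw [sq, ← Complex.cpow_add _ _ hu]
  norm_num

private lemma aux_sqrt_re_pos {u : ℂ} (hu : u ∈ Complex.slitPlane) :
    0 < (u ^ (1/2 : ℂ)).re := by
  have hne := Complex.slitPlane_ne_zero hu
  rw [Complex.cpow_def_of_ne_zero hne, Complex.exp_re]
  apply mul_pos (Real.exp_pos _)
  apply Real.cos_pos_of_mem_Ioo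
  have h1 := Complex.neg_pi_lt_arg u
  have h2 := (Complex.arg_le_pi u).lt_of_ne (Complex.slitPlane_arg_ne_pi hu)
  have him : (Complex.log u * (1/2)).im = u.arg / 2 := by
    simp [Complex.mul_im, Complex.log_im]
    ring
  rw [him]
  constructor <;> [linarith; linarith]
/-- The map `φ(z) = ½√(1-e^{-2πiz})`, with the branch of the square root having
positive imaginary part, is a conformal (holomorphic) bijection from the
slit-strip onto the upper half-plane. -/
theorem slitStrip_conformal_map (φ : ℂ → ℂ)
    (hcont : ContinuousOn φ slitStrip)
    (hsq : ∀ z ∈ slitStrip,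
      (2 * φ z)^2 = 1 - Complex.exp (-2 * (Real.pi : ℂ) * Complex.I * z))
    (him : ∀ z ∈ slitStrip, 0 < (φ z).im) :
    DifferentiableOn ℂ φ slitStrip ∧
      Set.BijOn φ slitStrip {w : ℂ | 0 < w.im} := by
  set c : ℂ := -2 * (Real.pi : ℂ) * Complex.I with hc
  have hπ : (Real.pi : ℂ) ≠ 0 := Complex.ofReal_ne_zero.mpr Real.pi_ne_zero
  have hcne : c ≠ 0 :=
    mul_ne_zero (mul_ne_zero (by norm_num) hπ) Complex.I_ne_zero
  -- pointwise formula for φ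
  have key : ∀ z ∈ slitStrip,
      φ z = 1/2 * Complex.I * (Complex.exp (c * z) - 1) ^ (1/2 : ℂ) := by
    intro z hz
    have hu : Complex.exp (c * z) - 1 ∈ Complex.slitPlane := aux_mem_slitPlane hz
    set u : ℂ := Complex.exp (c * z) - 1 with hudef
    have hune : u ≠ 0 := Complex.slitPlane_ne_zero hu
    have hsre : 0 < (u ^ (1/2 : ℂ)).re := aux_sqrt_re_pos hu
    have h1 : (2 * φ z) ^ 2 = (2 * (1/2 * Complex.I * u ^ (1/2:ℂ))) ^ 2 := by
      rw [hsq z hz]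
      have : (2 * (1/2 * Complex.I * u ^ (1/2:ℂ))) ^ 2
          = Complex.I^2 * (u ^ (1/2:ℂ))^2 := by ring
      rw [this, Complex.I_sq, aux_sqrt_sq hune]
      ring
    rcases sq_eq_sq_iff_eq_or_eq_neg.mp h1 with h | h
    · exact mul_left_cancel₀ two_ne_zero h
    · exfalso
      have himz := him z hz
      have := congrArg Complex.im h
      simp [Complex.mul_im, Complex.mul_re] at this
      linarith
  constructor
  · -- differentiability
    have hdiff : DifferentiableOn ℂ
        (fun z => 1/2 * Complex.I * (Complex.exp (c * z) - 1) ^ (1/2 : ℂ)) slitStrip := by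
      intro z hz
      apply DifferentiableAt.differentiableWithinAt
      apply DifferentiableAt.const_mul
      exact DifferentiableAt.cpow
        (((differentiable_id.const_mul c).cexp.sub_const 1) z)
        (differentiableAt_const _) (aux_mem_slitPlane hz)
    exact hdiff.congr key
  · refine ⟨fun z hz => him z hz, ?_, ?_⟩
    · -- injectivity
      intro z₁ h₁ z₂ h₂ heq
      have e1 := hsq z₁ h₁
      have e2 := hsq z₂ h₂
      rw [heq] at e1
      have hexp : Complex.exp (c * z₁) = Complex.exp (c * z₂) := by
        have := e1.symm.trans e2
        linear_combination -this
      obtain ⟨n, hn⟩ := Complex.exp_eq_exp_iff_exists_int.mp hexp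
      have hz12 : z₁ = z₂ - n := by
        apply mul_left_cancel₀ hcne
        rw [hn, hc]
        ring
      have hren : z₁.re = z₂.re - n := by
        rw [hz12]
        simp
      have hn0 : n = 0 := by
        have b1 := h₁.1; have b2 := h₁.2.1
        have b3 := h₂.1; have b4 := h₂.2.1
        have habs : |(n:ℝ)| < 1 := by
          rw [abs_lt, hren] at *; constructor <;> nlinarith
        rw [abs_lt] at habs
        have hl : (-1:ℤ) < n := by exact_mod_cast habs.1
        have hr : (n:ℤ) < 1 := by exact_mod_cast habs.2
        omega
      rw [hn0] at hz12
      simpa using hz12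
    · -- surjectivity
      intro w hw
      simp only [Set.mem_setOf_eq] at hw
      set u : ℂ := 1 - 4 * w ^ 2 with hudef
      have hureal : u.im = 0 → 1 < u.re := by
        intro h
        have him' : u.im = -(8 * w.re * w.im) := by
          simp [hudef, pow_two, Complex.mul_im, Complex.mul_re]; try ring
        have hwre : w.re = 0 := by
          rw [him'] at h
          have := hw.ne'
          nlinarith
        have hre' : u.re = 1 - 4 * (w.re * w.re - w.im * w.im) := by
          simp [hudef, pow_two, Complex.mul_re]; try ring
        rw [hre', hwre]
        nlinarith
      have hu0 : u ≠ 0 := by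
        intro h
        have := hureal (by rw [h]; simp)
        rw [h] at this
        simp at this
        linarith
      have harg2 : u.arg < Real.pi := by
        refine (Complex.arg_le_pi u).lt_of_ne ?_
        intro h
        obtain ⟨h1, h2⟩ := Complex.arg_eq_pi_iff.mp h
        linarith [hureal h2]
      have harg1 : -Real.pi < u.arg := Complex.neg_pi_lt_arg u
      set z : ℂ := ((2 * Real.pi)⁻¹ : ℝ) * (Complex.I * Complex.log u) with hzdef
      have hzre : z.re = -(u.arg) / (2 * Real.pi) := by
        simp [hzdef, Complex.mul_re, Complex.mul_im, Complex.log_im]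
        ring
      have hzim : z.im = Real.log (‖u‖) / (2 * Real.pi) := by
        simp [hzdef, Complex.mul_re, Complex.mul_im, Complex.log_re]
        ring
      have hπpos := Real.pi_pos
      have hzs : z ∈ slitStrip := by
        refine ⟨?_, ?_, ?_⟩
        · rw [hzre, lt_div_iff₀ (by linarith)]
          nlinarith
        · rw [hzre, div_lt_iff₀ (by linarith)]
          nlinarith
        · rintro ⟨h0, h0'⟩
          have harg0 : u.arg = 0 := by
            rw [hzre] at h0
            field_simp at h0
            linarith
          have himu := (Complex.arg_eq_zero_iff.mp harg0).2
          have hru := hureal himu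
          have habs : 1 < ‖u‖ := lt_of_lt_of_le hru (Complex.re_le_norm u)
          rw [hzim] at h0'
          have : 0 < Real.log (‖u‖) := Real.log_pos habs
          have : 0 < z.im := by rw [hzim]; positivity
          rw [hzim] at this
          linarith
      have hlog : c * z = Complex.log u := by
        rw [hzdef, hc]
        push_cast
        field_simp
        ring_nf
        rw [Complex.I_sq]
        ring
      have hexp : Complex.exp (c * z) = u := by rw [hlog, Complex.exp_log hu0]
      have hsqz : (2 * φ z) ^ 2 = (2 * w) ^ 2 := by
        rw [hsq z hzs, hexp, hudef]
        ring
      rcases sq_eq_sq_iff_eq_or_eq_neg.mp hsqz with h | h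
      · exact ⟨z, hzs, mul_left_cancel₀ two_ne_zero h⟩
      · exfalso
        have himz := him z hzs
        have := congrArg Complex.im h
        simp [Complex.mul_im] at this
        linarith
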